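/- For every integer d ≥ 2, the variance of D_d is exactly Var(D_d) = d!·(d+2)! / (6·(d+1)^{d−1}·(d+3)^{d−1}) − (d!)² / (d+1)^{2(d−1)}. -/

import Mathlib

open MeasureTheory ProbabilityTheory Real Filter Finset
open scoped NNReal ENNReal

/-- The Beta(a,b) distribution on ℝ: density x^(a-1)(1-x)^(b-1)/B(a,b) on (0,1),
where B(a,b) = Γ(a)Γ(b)/Γ(a+b). -/
noncomputable def betaMeasureR (a b : ℝ) : Measure ℝ :=
  volume.withDensity fun x =>
    ENNReal.ofReal (if x ∈ Set.Ioo (0 : ℝ) 1 then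
      x ^ (a - 1) * (1 - x) ^ (b - 1) / (Real.Gamma a * Real.Gamma b / Real.Gamma (a + b))
    else 0)

/-- `X` has the Beta(a,b) distribution under `P`. -/
def HasBetaDist {Ω : Type*} [MeasurableSpace Ω] (P : Measure Ω) (X : Ω → ℝ) (a b : ℝ) : Prop :=
  Measurable X ∧ Measure.map X P = betaMeasureR a b

lemma realBetaIntegral {s t : ℝ} (hs : 0 < s) (ht : 0 < t) :
    ∫ x in (0:ℝ)..1, x ^ (s - 1) * (1 - x) ^ (t - 1) =
      Real.Gamma s * Real.Gamma t / Real.Gamma (s + t) := by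
  have key := Complex.Gamma_mul_Gamma_eq_betaIntegral (s := (s:ℂ)) (t := (t:ℂ)) (by simpa) (by simpa)
  have hb : Complex.betaIntegral (s:ℂ) (t:ℂ) =
      ((∫ x in (0:ℝ)..1, x ^ (s - 1) * (1 - x) ^ (t - 1) : ℝ) : ℂ) := by
    rw [Complex.betaIntegral, ← intervalIntegral.integral_ofReal]
    refine intervalIntegral.integral_congr fun x hx => ?_
    rw [Set.uIcc_of_le (by norm_num)] at hx
    rw [Complex.ofReal_mul, Complex.ofReal_cpow hx.1,
      Complex.ofReal_cpow (by linarith [hx.2] : (0:ℝ) ≤ 1 - x)]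
    push_cast
    ring
  rw [hb] at key
  rw [eq_div_iff (Real.Gamma_pos_of_pos (by linarith : (0:ℝ) < s + t)).ne',
    ← Complex.ofReal_inj]
  push_cast [← Complex.Gamma_ofReal]
  rw [key]
  ring

lemma betaMeasure_moment {a b : ℝ} (ha : 0 < a) (hb : 0 < b) (n : ℕ) :
    ∫ x, x ^ n ∂(betaMeasureR a b) =
      Real.Gamma (a + n) * Real.Gamma (a + b) / (Real.Gamma a * Real.Gamma (a + b + n)) := by
  have hGa := Real.Gamma_pos_of_pos ha
  have hGb := Real.Gamma_pos_of_pos hb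
  have hGab := Real.Gamma_pos_of_pos (by linarith : (0:ℝ) < a + b)
  set c : ℝ := Real.Gamma a * Real.Gamma b / Real.Gamma (a + b) with hc
  have hcpos : 0 < c := by positivity
  set D : ℝ → ℝ := fun x => if x ∈ Set.Ioo (0:ℝ) 1 then
      x ^ (a - 1) * (1 - x) ^ (b - 1) / c else 0 with hDdef
  have hDmeas : Measurable D := by
    apply Measurable.ite measurableSet_Ioo _ measurable_const
    fun_prop
  have h1 : betaMeasureR a b
      = volume.withDensity (fun x => ((D x).toNNReal : ℝ≥0∞)) := rfl
  rw [h1, integral_withDensity_eq_integral_smul (f := fun x => (D x).toNNReal) (hDmeas.real_toNNReal) (fun x => x ^ n)]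
  have h2 : ∀ x : ℝ, ((D x).toNNReal : ℝ≥0) • (x:ℝ) ^ n =
      Set.indicator (Set.Ioo (0:ℝ) 1)
        (fun x => x ^ (a + n - 1) * (1 - x) ^ (b - 1) / c) x := by
    intro x
    rw [NNReal.smul_def, Real.coe_toNNReal']
    by_cases hx : x ∈ Set.Ioo (0:ℝ) 1
    · have hx0 : (0:ℝ) < x := hx.1
      have hx1 : (0:ℝ) < 1 - x := by linarith [hx.2]
      rw [Set.indicator_of_mem hx]
      simp only [hDdef, if_pos hx]
      rw [max_eq_left (by positivity)]
      have hxn : (x:ℝ) ^ n = x ^ ((n:ℝ)) := (Real.rpow_natCast x n).symm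
      have hsplit : x ^ (a + (n:ℝ) - 1) = x ^ (a - 1) * x ^ ((n:ℝ)) := by
        rw [← Real.rpow_add hx0]; ring_nf
      rw [smul_eq_mul, hxn, hsplit]; ring
    · rw [Set.indicator_of_notMem hx]
      have hD0 : D x = 0 := if_neg hx
      rw [hD0]
      simp
  simp_rw [h2]
  rw [integral_indicator measurableSet_Ioo]
  have h3 : ∫ x in Set.Ioo (0:ℝ) 1, x ^ (a + n - 1) * (1 - x) ^ (b - 1) / c
      = (∫ x in Set.Ioo (0:ℝ) 1, x ^ (a + n - 1) * (1 - x) ^ (b - 1)) / c :=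
    integral_div c _
  rw [h3, ← MeasureTheory.integral_Ioc_eq_integral_Ioo,
    ← intervalIntegral.integral_of_le (by norm_num : (0:ℝ) ≤ 1),
    realBetaIntegral (by positivity : (0:ℝ) < a + n) hb]
  have hGan := Real.Gamma_pos_of_pos (by positivity : (0:ℝ) < a + n)
  have h4 : a + (n:ℝ) + b = a + b + n := by ring
  rw [h4]
  have hGabn := Real.Gamma_pos_of_pos (by positivity : (0:ℝ) < a + b + n)
  rw [hc]
  field_simp

lemma betaMeasure_m1 {a b : ℝ} (ha : 0 < a) (hb : 0 < b) :
    ∫ x, x ∂(betaMeasureR a b) = a / (a + b) := by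
  have h := betaMeasure_moment ha hb 1
  simp only [pow_one, Nat.cast_one] at h
  rw [Real.Gamma_add_one ha.ne', Real.Gamma_add_one (by positivity : a + b ≠ 0)] at h
  rw [h]
  have hGa := Real.Gamma_pos_of_pos ha
  have hGab := Real.Gamma_pos_of_pos (by linarith : (0:ℝ) < a + b)
  field_simp

lemma betaMeasure_m2 {a b : ℝ} (ha : 0 < a) (hb : 0 < b) :
    ∫ x, x ^ 2 ∂(betaMeasureR a b) = a * (a + 1) / ((a + b) * (a + b + 1)) := by
  have h := betaMeasure_moment ha hb 2
  have e1 : a + ((2:ℕ):ℝ) = (a + 1) + 1 := by push_cast; ring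
  have e2 : a + b + ((2:ℕ):ℝ) = ((a + b) + 1) + 1 := by push_cast; ring
  rw [e1, e2, Real.Gamma_add_one (by positivity : a + 1 ≠ 0),
    Real.Gamma_add_one ha.ne', Real.Gamma_add_one (by positivity : a + b + 1 ≠ 0),
    Real.Gamma_add_one (by positivity : a + b ≠ 0)] at h
  rw [h]
  have hGa := Real.Gamma_pos_of_pos ha
  have hGab := Real.Gamma_pos_of_pos (by linarith : (0:ℝ) < a + b)
  field_simp

lemma HasBetaDist.ae_mem_Ioo {Ω : Type*} [MeasurableSpace Ω] {P : Measure Ω} {X : Ω → ℝ}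
    {a b : ℝ} (h : HasBetaDist P X a b) : ∀ᵐ ω ∂P, X ω ∈ Set.Ioo (0:ℝ) 1 := by
  obtain ⟨hm, hmap⟩ := h
  have h2 : Measure.map X P ((Set.Ioo (0:ℝ) 1)ᶜ) = 0 := by
    rw [hmap, betaMeasureR, withDensity_apply _ measurableSet_Ioo.compl]
    have hz : ∀ᵐ x ∂(volume.restrict (Set.Ioo (0:ℝ) 1)ᶜ), ENNReal.ofReal
        (if x ∈ Set.Ioo (0:ℝ) 1 then
          x ^ (a - 1) * (1 - x) ^ (b - 1) / (Real.Gamma a * Real.Gamma b / Real.Gamma (a + b))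
        else 0) = 0 := by
      rw [ae_restrict_iff' measurableSet_Ioo.compl]
      exact ae_of_all _ fun x hx => by rw [if_neg (by simpa using hx)]; simp
    rw [lintegral_congr_ae hz]
    simp
  rw [Measure.map_apply hm measurableSet_Ioo.compl] at h2
  rw [ae_iff]
  convert h2 using 2
  rfl

lemma HasBetaDist.moment {Ω : Type*} [MeasurableSpace Ω] {P : Measure Ω} {X : Ω → ℝ}
    {a b : ℝ} (h : HasBetaDist P X a b) (n : ℕ) :
    ∫ ω, (X ω) ^ n ∂P = ∫ x, x ^ n ∂(betaMeasureR a b) := by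
  rw [← h.2, integral_map h.1.aemeasurable]
  exact (measurable_id.pow_const n).aestronglyMeasurable

lemma integral_finset_prod_of_indep {ι : Type*} {Ω : Type*} [MeasurableSpace Ω]
    (P : Measure Ω) [IsProbabilityMeasure P] (Y : ι → Ω → ℝ)
    (hindep : iIndepFun Y P) (hm : ∀ i, Measurable (Y i))
    (hbd : ∀ i, ∀ᵐ ω ∂P, Y i ω ∈ Set.Icc (0:ℝ) 1) (s : Finset ι) :
    ∫ ω, ∏ j ∈ s, Y j ω ∂P = ∏ j ∈ s, ∫ ω, Y j ω ∂P := by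
  have hint : ∀ i, Integrable (Y i) P := fun i => by
    rw [← memLp_one_iff_integrable]
    refine MemLp.of_bound (hm i).aestronglyMeasurable 1 ?_
    filter_upwards [hbd i] with ω hω
    rw [Real.norm_eq_abs, abs_le]
    exact ⟨by linarith [hω.1], hω.2⟩
  classical
  induction s using Finset.induction_on with
  | empty => simp
  | @insert i s hi ih =>
    have hprod_bd : ∀ᵐ ω ∂P, (∏ j ∈ s, Y j ω) ∈ Set.Icc (0:ℝ) 1 := by
      have := (ae_ball_iff s.countable_toSet).2 (fun j _ => hbd j)
      filter_upwards [this] with ω hω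
      exact ⟨Finset.prod_nonneg fun j hj => (hω j hj).1,
        Finset.prod_le_one (fun j hj => (hω j hj).1) (fun j hj => (hω j hj).2)⟩
    have hprod_int : Integrable (fun ω => ∏ j ∈ s, Y j ω) P := by
      rw [← memLp_one_iff_integrable]
      refine MemLp.of_bound ?_ 1 ?_
      · exact (Finset.measurable_prod s (fun j _ => hm j)).aestronglyMeasurable
      · filter_upwards [hprod_bd] with ω hω
        rw [Real.norm_eq_abs, abs_le]
        exact ⟨by linarith [hω.1], hω.2⟩
    have hIF : IndepFun (fun ω => ∏ j ∈ s, Y j ω) (Y i) P := by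
      have := hindep.indepFun_finsetProd_of_notMem hm hi
      rwa [show (∏ j ∈ s, Y j) = fun ω => ∏ j ∈ s, Y j ω from funext fun ω => by
        simp [Finset.prod_apply]] at this
    rw [Finset.prod_insert hi, ← ih]
    have := hIF.symm.integral_mul_eq_mul_integral (hint i).aestronglyMeasurable hprod_int.aestronglyMeasurable
    simp_rw [Finset.prod_insert hi]
    convert this using 1
    rfl

lemma prod_Icc_add_one (n : ℕ) : ∏ j ∈ Finset.Icc 1 n, (j + 1) = (n + 1).factorial := by
  induction n with
  | zero => simp
  | succ n ih =>
    rw [Finset.prod_Icc_succ_top (by omega), ih, mul_comm, ← Nat.factorial_succ]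

lemma prod_Icc_add_three (n : ℕ) : 6 * ∏ j ∈ Finset.Icc 1 n, (j + 3) = (n + 3).factorial := by
  induction n with
  | zero => simp [Nat.factorial]
  | succ n ih =>
    rw [Finset.prod_Icc_succ_top (by omega),
      show (6 : ℕ) * ((∏ j ∈ Finset.Icc 1 n, (j + 3)) * (n + 1 + 3)) =
        (n + 1 + 3) * (6 * ∏ j ∈ Finset.Icc 1 n, (j + 3)) from by ring,
      ih, show n + 1 + 3 = (n + 3) + 1 from by omega, ← Nat.factorial_succ]

theorem stmt10
    {Ω : Type*} [MeasurableSpace Ω] (P : Measure Ω) [IsProbabilityMeasure P]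
    (X : ℕ → ℕ → Ω → ℝ)
    (hindep : ∀ d : ℕ, 2 ≤ d →
      iIndepFun
        (fun j : {j : ℕ // 1 ≤ j ∧ j ≤ d - 1} => X d j) P)
    (hX : ∀ d j : ℕ, 2 ≤ d → 1 ≤ j → j ≤ d - 1 →
      HasBetaDist P (X d j) (((j : ℝ) + 1) / 2) (((d : ℝ) - (j : ℝ)) / 2)) :
    ∀ d : ℕ, 2 ≤ d →
      variance (fun ω => (∏ j ∈ Finset.Icc 1 (d - 1), X d j ω)) P =
        (Nat.factorial d : ℝ) * (Nat.factorial (d + 2) : ℝ) /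
          (6 * ((d : ℝ) + 1) ^ (d - 1) * ((d : ℝ) + 3) ^ (d - 1)) -
        (Nat.factorial d : ℝ) ^ 2 / ((d : ℝ) + 1) ^ (2 * (d - 1)) := by
  intro d hd
  haveI : Fintype {j : ℕ // 1 ≤ j ∧ j ≤ d - 1} :=
    Fintype.ofFinset (Finset.Icc 1 (d - 1)) (fun j => by rw [Finset.mem_Icc]; exact Iff.rfl)
  set ι := {j : ℕ // 1 ≤ j ∧ j ≤ d - 1}
  have hsub : ∀ x : ℕ, x ∈ Finset.Icc 1 (d - 1) ↔ 1 ≤ x ∧ x ≤ d - 1 :=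
    fun x => by simp [Finset.mem_Icc]
  have hjm : ∀ j : ι, HasBetaDist P (X d j)
      ((((j:ℕ) : ℝ) + 1) / 2) (((d : ℝ) - ((j:ℕ) : ℝ)) / 2) :=
    fun j => hX d j hd j.2.1 j.2.2
  have hmeas : ∀ j : ι, Measurable (X d (j:ℕ)) := fun j => (hjm j).1
  have hjlt : ∀ j : ι, ((j:ℕ) : ℝ) < (d : ℝ) := by
    intro j
    have : (j:ℕ) < d := by have := j.2.2; omega
    exact_mod_cast this
  have hdpos : (0:ℝ) < (d : ℝ) + 1 := by positivity
  have hd3pos : (0:ℝ) < (d : ℝ) + 3 := by positivity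
  have hbd : ∀ j : ι, ∀ᵐ ω ∂P, X d (j:ℕ) ω ∈ Set.Icc (0:ℝ) 1 := fun j =>
    (hjm j).ae_mem_Ioo.mono fun ω h => ⟨le_of_lt h.1, le_of_lt h.2⟩
  -- individual moments
  have m1 : ∀ j : ι, ∫ ω, X d (j:ℕ) ω ∂P = (((j:ℕ) : ℝ) + 1) / ((d : ℝ) + 1) := by
    intro j
    have ha : (0:ℝ) < (((j:ℕ) : ℝ) + 1) / 2 := by positivity
    have hb : (0:ℝ) < ((d : ℝ) - ((j:ℕ) : ℝ)) / 2 := by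
      have := hjlt j; linarith
    have h := (hjm j).moment 1
    simp only [pow_one] at h
    rw [h, betaMeasure_m1 ha hb]
    rw [show (((j:ℕ) : ℝ) + 1) / 2 + ((d : ℝ) - ((j:ℕ) : ℝ)) / 2 = ((d : ℝ) + 1) / 2 by ring]
    field_simp
  have m2 : ∀ j : ι, ∫ ω, (X d (j:ℕ) ω) ^ 2 ∂P =
      (((j:ℕ) : ℝ) + 1) * (((j:ℕ) : ℝ) + 3) / (((d : ℝ) + 1) * ((d : ℝ) + 3)) := by
    intro j
    have ha : (0:ℝ) < (((j:ℕ) : ℝ) + 1) / 2 := by positivity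
    have hb : (0:ℝ) < ((d : ℝ) - ((j:ℕ) : ℝ)) / 2 := by
      have := hjlt j; linarith
    have h := (hjm j).moment 2
    rw [h, betaMeasure_m2 ha hb]
    rw [show (((j:ℕ) : ℝ) + 1) / 2 + ((d : ℝ) - ((j:ℕ) : ℝ)) / 2 = ((d : ℝ) + 1) / 2 by ring]
    field_simp
    ring
  -- MemLp
  have hallbd : ∀ᵐ ω ∂P, ∀ j ∈ Finset.Icc 1 (d - 1), X d j ω ∈ Set.Icc (0:ℝ) 1 := by
    have h := (ae_ball_iff (Finset.Icc 1 (d - 1)).countable_toSet).2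
      (fun (j : ℕ) (hj : j ∈ (↑(Finset.Icc 1 (d - 1)) : Set ℕ)) =>
        hbd ⟨j, (hsub j).1 (Finset.mem_coe.1 hj)⟩)
    filter_upwards [h] with ω hω j hj
    exact hω j (Finset.mem_coe.2 hj)
  have hDmeas : Measurable (fun ω => ∏ j ∈ Finset.Icc 1 (d - 1), X d j ω) :=
    Finset.measurable_prod _ (fun j hj => hmeas ⟨j, (hsub j).1 hj⟩)
  have hmem2 : MemLp (fun ω => ∏ j ∈ Finset.Icc 1 (d - 1), X d j ω) 2 P := by
    refine MemLp.of_bound hDmeas.aestronglyMeasurable 1 ?_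
    filter_upwards [hallbd] with ω hω
    rw [Real.norm_eq_abs, abs_le]
    constructor
    · have : (0:ℝ) ≤ ∏ j ∈ Finset.Icc 1 (d - 1), X d j ω :=
        Finset.prod_nonneg fun j hj => (hω j hj).1
      linarith
    · exact Finset.prod_le_one (fun j hj => (hω j hj).1) (fun j hj => (hω j hj).2)
  rw [variance_eq_sub hmem2]
  -- first moment of the product
  have hE1 : ∫ ω, (∏ j ∈ Finset.Icc 1 (d - 1), X d j ω) ∂P =
      (Nat.factorial d : ℝ) / ((d : ℝ) + 1) ^ (d - 1) := by
    have e1 : ∀ ω, ∏ j ∈ Finset.Icc 1 (d - 1), X d j ω = ∏ j : ι, X d (j:ℕ) ω :=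
      fun ω => Finset.prod_subtype _ hsub _
    simp_rw [e1]
    rw [integral_finset_prod_of_indep P _ (hindep d hd) hmeas hbd Finset.univ]
    have e2 : ∀ j : ι, ∫ ω, X d (j:ℕ) ω ∂P = (((j:ℕ) : ℝ) + 1) / ((d : ℝ) + 1) := m1
    rw [Finset.prod_congr rfl (fun j _ => e2 j)]
    rw [← Finset.prod_subtype (Finset.Icc 1 (d - 1)) hsub
      (fun j => ((j : ℝ) + 1) / ((d : ℝ) + 1))]
    rw [Finset.prod_div_distrib, Finset.prod_const, Nat.card_Icc]
    congr 1
    have hcast : ∏ j ∈ Finset.Icc 1 (d - 1), ((j : ℝ) + 1) =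
        ((∏ j ∈ Finset.Icc 1 (d - 1), (j + 1) : ℕ) : ℝ) := by push_cast; rfl
    rw [hcast, prod_Icc_add_one, show d - 1 + 1 = d from by omega]
  -- second moment of the product
  have hE2 : ∫ ω, (∏ j ∈ Finset.Icc 1 (d - 1), X d j ω) ^ 2 ∂P =
      (Nat.factorial d : ℝ) * (Nat.factorial (d + 2) : ℝ) /
        (6 * ((d : ℝ) + 1) ^ (d - 1) * ((d : ℝ) + 3) ^ (d - 1)) := by
    have e1 : ∀ ω, (∏ j ∈ Finset.Icc 1 (d - 1), X d j ω) ^ 2 =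
        ∏ j : ι, (X d (j:ℕ) ω) ^ 2 := by
      intro ω
      rw [Finset.prod_subtype _ hsub (fun j => X d j ω), ← Finset.prod_pow]
    simp_rw [e1]
    have hindep2 : iIndepFun
        (fun (j : ι) (ω : Ω) => (X d (j:ℕ) ω) ^ 2) P :=
      (hindep d hd).comp (fun _ => fun x : ℝ => x ^ 2)
        (fun _ => measurable_id.pow_const 2)
    have hbd2 : ∀ j : ι, ∀ᵐ ω ∂P, (X d (j:ℕ) ω) ^ 2 ∈ Set.Icc (0:ℝ) 1 := by
      intro j
      filter_upwards [hbd j] with ω hω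
      exact ⟨sq_nonneg _, pow_le_one₀ hω.1 hω.2⟩
    rw [integral_finset_prod_of_indep P _ hindep2
      (fun j => (hmeas j).pow_const 2) hbd2 Finset.univ]
    rw [Finset.prod_congr rfl (fun j _ => m2 j)]
    rw [← Finset.prod_subtype (Finset.Icc 1 (d - 1)) hsub
      (fun j => ((j : ℝ) + 1) * ((j : ℝ) + 3) / (((d : ℝ) + 1) * ((d : ℝ) + 3)))]
    rw [Finset.prod_div_distrib, Finset.prod_const, Nat.card_Icc]
    have hnum : ∏ j ∈ Finset.Icc 1 (d - 1), (((j : ℝ) + 1) * ((j : ℝ) + 3)) =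
        (Nat.factorial d : ℝ) * ((Nat.factorial (d + 2) : ℝ) / 6) := by
      rw [Finset.prod_mul_distrib]
      have hc1 : ∏ j ∈ Finset.Icc 1 (d - 1), ((j : ℝ) + 1) =
          ((∏ j ∈ Finset.Icc 1 (d - 1), (j + 1) : ℕ) : ℝ) := by push_cast; rfl
      have hc3 : ∏ j ∈ Finset.Icc 1 (d - 1), ((j : ℝ) + 3) =
          ((∏ j ∈ Finset.Icc 1 (d - 1), (j + 3) : ℕ) : ℝ) := by push_cast; rfl
      have h3 : ((∏ j ∈ Finset.Icc 1 (d - 1), (j + 3) : ℕ) : ℝ) =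
          (Nat.factorial (d + 2) : ℝ) / 6 := by
        rw [eq_div_iff (by norm_num : (6:ℝ) ≠ 0)]
        have := prod_Icc_add_three (d - 1)
        rw [show d - 1 + 3 = d + 2 from by omega] at this
        exact_mod_cast by rw [mul_comm] at this; exact this
      rw [hc1, hc3, prod_Icc_add_one, show d - 1 + 1 = d from by omega, h3]
    rw [hnum, mul_pow, show d - 1 + 1 - 1 = d - 1 from by omega]
    have hA : (0:ℝ) < ((d : ℝ) + 1) ^ (d - 1) := by positivity
    have hB : (0:ℝ) < ((d : ℝ) + 3) ^ (d - 1) := by positivity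
    field_simp
  simp only [Pi.pow_apply]
  rw [hE2, hE1, div_pow, ← pow_mul,
    show (d - 1) * 2 = 2 * (d - 1) from mul_comm _ _]
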